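/- (Smoothing property of the damped smoother via Reusken's Lemma.) Define the damped preconditioner P̂₂(μ) = I_{LMN} − 2μ (I_L ⊗ Q_Δ ⊗ A) and the damped smoother iteration matrix T₂(μ) = I_{LMN} − P̂₂(μ)^{-1} C(μ). Assume Q_Δ and A are invertible and that ‖ I_L ⊗ (I_M − Q_Δ^{-1} Q) ⊗ I_N ‖ < 1. Then there exist constants c > 0 and μ* > 0 such that for all μ ≥ μ* and all integers k ≥ 1, P̂₂(μ) is invertible and ‖ C(μ) · T₂(μ)^k ‖ ≤ c · √(8/(kπ)) · μ. -/

import Mathlib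

/-!
STATEMENT 17 (Smoothing property of the damped smoother via Reusken's Lemma):
With P̂₂(μ) = I − 2μ (I_L ⊗ Q_Δ ⊗ A) and T₂(μ) = I − P̂₂(μ)⁻¹ C(μ), assume Q_Δ and
A are invertible and ‖I_L ⊗ (I_M − Q_Δ⁻¹Q) ⊗ I_N‖ < 1. Then there exist c > 0 and
μ* > 0 such that for all μ ≥ μ* and all k ≥ 1, P̂₂(μ) is invertible and
‖ C(μ) · T₂(μ)^k ‖ ≤ c · √(8/(kπ)) · μ.
-/

noncomputable section

open Matrix
open scoped Kronecker

/-- Complexification of a real matrix. -/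
def cmplx {m n : Type*} (A : Matrix m n ℝ) : Matrix m n ℂ := A.map (fun x => (x : ℂ))

/-- The matrix `E` with ones on the first subdiagonal and zeros elsewhere. -/
def Emat (L : ℕ) : Matrix (Fin L) (Fin L) ℂ :=
  Matrix.of fun i j => if (i : ℕ) = (j : ℕ) + 1 then 1 else 0

/-- The matrix `N_M` whose last column consists of ones, all other entries zero. -/
def Nmat (M : ℕ) : Matrix (Fin M) (Fin M) ℂ :=
  Matrix.of fun _ j => if (j : ℕ) = M - 1 then 1 else 0

/-- `H = N_M ⊗ I_N`. -/
def Hmat (M N : ℕ) : Matrix (Fin M × Fin N) (Fin M × Fin N) ℂ :=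
  Nmat M ⊗ₖ (1 : Matrix (Fin N) (Fin N) ℂ)

/-- `E ⊗ H`. -/
def EH (L M N : ℕ) : Matrix (Fin L × Fin M × Fin N) (Fin L × Fin M × Fin N) ℂ :=
  Emat L ⊗ₖ Hmat M N

/-- The composite collocation matrix `C(μ) = I − μ (I_L ⊗ Q ⊗ A) − E ⊗ H`. -/
def Cmat (L : ℕ) {M N : ℕ} (Q : Matrix (Fin M) (Fin M) ℝ) (A : Matrix (Fin N) (Fin N) ℂ)
    (μ : ℝ) : Matrix (Fin L × Fin M × Fin N) (Fin L × Fin M × Fin N) ℂ :=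
  1 - (μ : ℂ) • ((1 : Matrix (Fin L) (Fin L) ℂ) ⊗ₖ (cmplx Q ⊗ₖ A)) - EH L M N

/-- The approximative block Jacobi preconditioner `P̂(μ) = I − μ (I_L ⊗ Q_Δ ⊗ A)`. -/
def Phat (L : ℕ) {M N : ℕ} (QΔ : Matrix (Fin M) (Fin M) ℝ) (A : Matrix (Fin N) (Fin N) ℂ)
    (μ : ℝ) : Matrix (Fin L × Fin M × Fin N) (Fin L × Fin M × Fin N) ℂ :=
  1 - (μ : ℂ) • ((1 : Matrix (Fin L) (Fin L) ℂ) ⊗ₖ (cmplx QΔ ⊗ₖ A))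

/-- The smoother iteration matrix `T_S(μ) = I − P̂(μ)⁻¹ C(μ)`. -/
def Tsmooth (L : ℕ) {M N : ℕ} (Q QΔ : Matrix (Fin M) (Fin M) ℝ)
    (A : Matrix (Fin N) (Fin N) ℂ) (μ : ℝ) :
    Matrix (Fin L × Fin M × Fin N) (Fin L × Fin M × Fin N) ℂ :=
  1 - (Phat L QΔ A μ)⁻¹ * Cmat L Q A μ

/-- The damped block Jacobi preconditioner `P̂₂(μ) = I − 2μ (I_L ⊗ Q_Δ ⊗ A)`. -/
def Phat2 (L : ℕ) {M N : ℕ} (QΔ : Matrix (Fin M) (Fin M) ℝ) (A : Matrix (Fin N) (Fin N) ℂ)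
    (μ : ℝ) : Matrix (Fin L × Fin M × Fin N) (Fin L × Fin M × Fin N) ℂ :=
  1 - ((2 * μ : ℝ) : ℂ) • ((1 : Matrix (Fin L) (Fin L) ℂ) ⊗ₖ (cmplx QΔ ⊗ₖ A))

/-- The damped smoother iteration matrix `T₂(μ) = I − P̂₂(μ)⁻¹ C(μ)`. -/
def Tdamped (L : ℕ) {M N : ℕ} (Q QΔ : Matrix (Fin M) (Fin M) ℝ)
    (A : Matrix (Fin N) (Fin N) ℂ) (μ : ℝ) :
    Matrix (Fin L × Fin M × Fin N) (Fin L × Fin M × Fin N) ℂ :=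
  1 - (Phat2 L QΔ A μ)⁻¹ * Cmat L Q A μ

/-- The operator norm induced by the Euclidean vector norm. -/
def opNorm {n : Type*} [Fintype n] [DecidableEq n] (A : Matrix n n ℂ) : ℝ :=
  ‖Matrix.toEuclideanCLM (𝕜 := ℂ) A‖

/- ===== auxiliary lemmas ===== -/

section AuxGeneral

lemma real_rhs_eq (p q r u m : ℝ) (hr : r ≠ 0) (hp : p ≠ 0) :
    p * q * (2 * u / (r * p)) * m = q * (2 * u) * m / r := by
  field_simp

lemma ring_inverse_eq' {R : Type*} [MonoidWithZero R] {a b : R} (h1 : a * b = 1)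
    (h2 : b * a = 1) : Ring.inverse a = b := by
  have hu : IsUnit a := ⟨⟨a, b, h1, h2⟩, rfl⟩
  obtain ⟨u, rfl⟩ := hu
  rw [Ring.inverse_unit]
  exact Units.inv_eq_of_mul_eq_one_right h1

lemma centralBinom_real_bound : ∀ n : ℕ, (Nat.centralBinom n : ℝ) * Real.sqrt (n + 1) ≤ 4 ^ n := by
  intro n
  induction n with
  | zero => simp [Nat.centralBinom]
  | succ n ih =>
    have hx : Real.sqrt (n + 1) ^ 2 = (n:ℝ) + 1 := Real.sq_sqrt (by positivity)
    have hy : Real.sqrt (n + 2) ^ 2 = (n:ℝ) + 2 := Real.sq_sqrt (by positivity)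
    have hxpos : 0 < Real.sqrt (n + 1) := Real.sqrt_pos.mpr (by positivity)
    have hypos : 0 < Real.sqrt (n + 2) := Real.sqrt_pos.mpr (by positivity)
    have key : (2 * (n:ℝ) + 1) * Real.sqrt (n + 2) ≤ 2 * ((n:ℝ) + 1) * Real.sqrt (n + 1) := by
      have h1 : ((2 * (n:ℝ) + 1) * Real.sqrt (n + 2)) ^ 2 ≤ (2 * ((n:ℝ) + 1) * Real.sqrt (n + 1)) ^ 2 := by
        rw [mul_pow, mul_pow, hx, hy]
        nlinarith [sq_nonneg ((n:ℝ))]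
      have h2 : 0 ≤ (2 * (n:ℝ) + 1) * Real.sqrt (n + 2) := by positivity
      have h3 : 0 ≤ 2 * ((n:ℝ) + 1) * Real.sqrt (n + 1) := by positivity
      nlinarith [h1, h2, h3]
    have hrec : ((n:ℝ) + 1) * (Nat.centralBinom (n + 1) : ℝ) = 2 * (2 * n + 1) * Nat.centralBinom n := by
      have := Nat.succ_mul_centralBinom_succ n
      have := congrArg (fun m : ℕ => (m : ℝ)) this
      push_cast at this
      linarith [this]
    have hcb : (0:ℝ) ≤ (Nat.centralBinom n : ℝ) := by positivity
    have hnp : (0:ℝ) < (n:ℝ) + 1 := by positivity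
    rw [← mul_le_mul_iff_right₀ hnp]
    have e1 : ((n:ℝ) + 1) * ((Nat.centralBinom (n+1) : ℝ) * Real.sqrt (↑(n+1) + 1)) =
        2 * (2 * n + 1) * (Nat.centralBinom n : ℝ) * Real.sqrt ((n:ℝ) + 2) := by
      push_cast
      rw [show ((n:ℝ)+1+1) = (n:ℝ)+2 by ring, ← mul_assoc, hrec]
    rw [e1]
    have step : 2 * (2 * (n:ℝ) + 1) * (Nat.centralBinom n : ℝ) * Real.sqrt ((n:ℝ) + 2) ≤
        4 * ((n:ℝ) + 1) * ((Nat.centralBinom n : ℝ) * Real.sqrt ((n:ℝ) + 1)) := by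
      nlinarith [mul_le_mul_of_nonneg_left key hcb]
    calc 2 * (2 * (n:ℝ) + 1) * (Nat.centralBinom n : ℝ) * Real.sqrt ((n:ℝ) + 2)
        ≤ 4 * ((n:ℝ) + 1) * ((Nat.centralBinom n : ℝ) * Real.sqrt ((n:ℝ) + 1)) := step
      _ ≤ 4 * ((n:ℝ) + 1) * 4 ^ n := by
          have h4 : (0:ℝ) ≤ 4 * ((n:ℝ) + 1) := by positivity
          exact mul_le_mul_of_nonneg_left (by exact_mod_cast ih) h4
      _ = ((n:ℝ) + 1) * 4 ^ (n + 1) := by ring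

lemma choose_mono_up {k i : ℕ} (h : 2 * i + 1 ≤ k) : Nat.choose k i ≤ Nat.choose k (i + 1) := by
  have hid := Nat.choose_succ_right_eq k i
  have hik : i + 1 ≤ k - i := by omega
  have h1 : Nat.choose k i * (i + 1) ≤ Nat.choose k i * (k - i) :=
    Nat.mul_le_mul_left _ hik
  rw [← hid] at h1
  exact Nat.le_of_mul_le_mul_right h1 (Nat.succ_pos i)

lemma choose_mono_down {k i : ℕ} (h : k ≤ 2 * i + 1) : Nat.choose k (i + 1) ≤ Nat.choose k i := by
  by_cases hik : k ≤ i
  · rcases Nat.lt_or_ge i k with h' | h'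
    · omega
    · rw [Nat.choose_eq_zero_of_lt (by omega)]
      exact Nat.zero_le _
  · have hid := Nat.choose_succ_right_eq k i
    have hik2 : k - i ≤ i + 1 := by omega
    have h1 : Nat.choose k (i + 1) * (i + 1) ≤ Nat.choose k i * (i + 1) := by
      rw [hid]
      exact Nat.mul_le_mul_left _ hik2
    exact Nat.le_of_mul_le_mul_right h1 (Nat.succ_pos i)

/-- The sum of absolute differences of a binomial row. -/
lemma sum_abs_choose_diff {k : ℕ} (hk : 1 ≤ k) :
    ∑ j ∈ Finset.range (k + 2),
      |(Nat.choose k j : ℝ) - (if j = 0 then 0 else (Nat.choose k (j - 1) : ℝ))| =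
    2 * Nat.choose k ((k + 1) / 2) := by
  set m := (k + 1) / 2 with hm
  have hmk : m ≤ k := by omega
  have hsplit := Finset.sum_range_add
    (f := fun j => |(Nat.choose k j : ℝ) - (if j = 0 then 0 else (Nat.choose k (j - 1) : ℝ))|)
    (m + 1) (k + 1 - m)
  have hidx : m + 1 + (k + 1 - m) = k + 2 := by omega
  rw [hidx] at hsplit
  rw [hsplit]
  have hS1 : ∑ j ∈ Finset.range (m + 1),
      |(Nat.choose k j : ℝ) - (if j = 0 then 0 else (Nat.choose k (j - 1) : ℝ))| =
      Nat.choose k m := by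
    rw [Finset.sum_range_succ']
    have hterm : ∀ i ∈ Finset.range m,
        |(Nat.choose k (i + 1) : ℝ) - (if i + 1 = 0 then 0 else (Nat.choose k (i + 1 - 1) : ℝ))| =
        (Nat.choose k (i + 1) : ℝ) - Nat.choose k i := by
      intro i hi
      simp only [Finset.mem_range] at hi
      have : Nat.choose k i ≤ Nat.choose k (i + 1) := choose_mono_up (by omega)
      rw [if_neg (by omega)]
      simp only [Nat.add_sub_cancel]
      rw [abs_of_nonneg (sub_nonneg.mpr (Nat.cast_le.mpr this))]
    rw [Finset.sum_congr rfl hterm, Finset.sum_range_sub (fun i => (Nat.choose k i : ℝ))]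
    simp
  have hS2 : ∑ j ∈ Finset.range (k + 1 - m),
      |(Nat.choose k (m + 1 + j) : ℝ) -
        (if m + 1 + j = 0 then 0 else (Nat.choose k (m + 1 + j - 1) : ℝ))| =
      Nat.choose k m := by
    have hterm : ∀ j ∈ Finset.range (k + 1 - m),
        |(Nat.choose k (m + 1 + j) : ℝ) -
          (if m + 1 + j = 0 then 0 else (Nat.choose k (m + 1 + j - 1) : ℝ))| =
        (Nat.choose k (m + j) : ℝ) - Nat.choose k (m + (j + 1)) := by
      intro j hj
      have hmono : Nat.choose k (m + j + 1) ≤ Nat.choose k (m + j) :=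
        choose_mono_down (by omega)
      rw [if_neg (by omega)]
      have e : m + 1 + j - 1 = m + j := by omega
      have e2 : m + 1 + j = m + (j + 1) := by omega
      have e3 : m + (j + 1) = m + j + 1 := by omega
      rw [e, e2, abs_sub_comm]
      rw [abs_of_nonneg (sub_nonneg.mpr (Nat.cast_le.mpr (e3 ▸ hmono)))]
    rw [Finset.sum_congr rfl hterm, Finset.sum_range_sub' (fun j => (Nat.choose k (m + j) : ℝ))]
    have : m + (k + 1 - m) = k + 1 := by omega
    rw [this, Nat.choose_succ_self]
    simp
  rw [hS1, hS2]
  ring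

/-- `C(k, ⌈k/2⌉) √k ≤ √2 · 2^k` for `k ≥ 1`. -/
lemma choose_middle_sqrt_bound {k : ℕ} (hk : 1 ≤ k) :
    (Nat.choose k ((k + 1) / 2) : ℝ) * Real.sqrt k ≤ Real.sqrt 2 * 2 ^ k := by
  rcases Nat.even_or_odd k with ⟨n, hn⟩ | ⟨n, hn⟩
  · subst hn
    have hn1 : 1 ≤ n := by omega
    have hmid : (n + n + 1) / 2 = n := by omega
    rw [hmid]
    have hcb : (Nat.choose (n + n) n : ℝ) = Nat.centralBinom n := by
      rw [Nat.centralBinom, two_mul]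
    rw [hcb]
    have hsq : Real.sqrt (n + n) ≤ Real.sqrt 2 * Real.sqrt (n + 1) := by
      rw [← Real.sqrt_mul (by norm_num)]
      exact Real.sqrt_le_sqrt (by push_cast; nlinarith)
    have hb := centralBinom_real_bound n
    have hcbpos : (0:ℝ) ≤ (Nat.centralBinom n : ℝ) := by positivity
    calc (Nat.centralBinom n : ℝ) * Real.sqrt (↑(n + n))
        ≤ (Nat.centralBinom n : ℝ) * (Real.sqrt 2 * Real.sqrt (n + 1)) := by
          apply mul_le_mul_of_nonneg_left _ hcbpos
          convert hsq using 2
          rfl; push_cast; ring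
      _ = Real.sqrt 2 * ((Nat.centralBinom n : ℝ) * Real.sqrt (n + 1)) := by ring
      _ ≤ Real.sqrt 2 * 4 ^ n :=
          mul_le_mul_of_nonneg_left hb (Real.sqrt_nonneg 2)
      _ = Real.sqrt 2 * 2 ^ (n + n) := by
          congr 1
          rw [show (4:ℝ) = 2^2 by norm_num, ← pow_mul]
          congr 1; omega
  · subst hn
    have hmid : (2 * n + 1 + 1) / 2 = n + 1 := by omega
    rw [hmid]
    have hhalf : Nat.choose (2 * n + 1) (n + 1) * 2 = Nat.centralBinom (n + 1) := by
      have hsymm : Nat.choose (2 * n + 1) n = Nat.choose (2 * n + 1) (n + 1) := by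
        have h0 := Nat.choose_symm (n := 2 * n + 1) (k := n + 1) (by omega)
        have e2 : 2 * n + 1 - (n + 1) = n := by omega
        rw [e2] at h0
        exact h0
      have hpascal : (2 * n + 1 + 1).choose (n + 1) =
          (2 * n + 1).choose n + (2 * n + 1).choose (n + 1) := Nat.choose_succ_succ _ _
      rw [Nat.centralBinom, show 2 * (n + 1) = (2 * n + 1) + 1 from by omega]
      omega
    have hsq : Real.sqrt (2 * n + 1) ≤ Real.sqrt 2 * Real.sqrt (n + 2) := by
      rw [← Real.sqrt_mul (by norm_num)]
      exact Real.sqrt_le_sqrt (by push_cast; nlinarith)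
    have hb := centralBinom_real_bound (n + 1)
    have hc : (Nat.choose (2 * n + 1) (n + 1) : ℝ) * 2 = Nat.centralBinom (n + 1) := by
      exact_mod_cast congrArg (fun x : ℕ => (x:ℝ)) hhalf
    have hcpos : (0:ℝ) ≤ (Nat.choose (2 * n + 1) (n + 1) : ℝ) := by positivity
    have hy : (0:ℝ) ≤ Real.sqrt (n + 2) := Real.sqrt_nonneg _
    have key : (Nat.choose (2 * n + 1) (n + 1) : ℝ) * Real.sqrt (2 * n + 1) * (2 * Real.sqrt (n + 2))
        ≤ Real.sqrt 2 * 2 ^ (2 * n + 1) * (2 * Real.sqrt (n + 2)) := by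
      calc (Nat.choose (2 * n + 1) (n + 1) : ℝ) * Real.sqrt (2 * n + 1) * (2 * Real.sqrt (n + 2))
          ≤ (Nat.choose (2 * n + 1) (n + 1) : ℝ) * (Real.sqrt 2 * Real.sqrt (n + 2)) * (2 * Real.sqrt (n + 2)) := by
            apply mul_le_mul_of_nonneg_right _ (by positivity)
            exact mul_le_mul_of_nonneg_left hsq hcpos
        _ = Real.sqrt 2 * (((Nat.choose (2 * n + 1) (n + 1) : ℝ) * 2) * (Real.sqrt (n + 2) * Real.sqrt (n + 2))) := by ring
        _ = Real.sqrt 2 * ((Nat.centralBinom (n + 1) : ℝ) * ((n:ℝ) + 2)) := by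
            rw [hc, Real.mul_self_sqrt (by positivity)]
        _ ≤ Real.sqrt 2 * (4 ^ (n + 1) * Real.sqrt (n + 2)) := by
            apply mul_le_mul_of_nonneg_left _ (Real.sqrt_nonneg 2)
            have h2 : (Nat.centralBinom (n+1) : ℝ) * ((n:ℝ) + 2) =
                ((Nat.centralBinom (n+1) : ℝ) * Real.sqrt ((n:ℝ) + 2)) * Real.sqrt ((n:ℝ) + 2) := by
              rw [mul_assoc, Real.mul_self_sqrt (by positivity)]
            rw [h2]
            apply mul_le_mul_of_nonneg_right _ hy
            convert hb using 3
            rfl; push_cast; ring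
        _ = Real.sqrt 2 * 2 ^ (2 * n + 1) * (2 * Real.sqrt (n + 2)) := by
            rw [show (4:ℝ) = 2^2 by norm_num, ← pow_mul]
            ring
    have hpos2 : (0:ℝ) < 2 * Real.sqrt (n + 2) := by positivity
    have hfin := le_of_mul_le_mul_right key hpos2
    calc (Nat.choose (2 * n + 1) (n + 1) : ℝ) * Real.sqrt (↑(2 * n + 1))
        = (Nat.choose (2 * n + 1) (n + 1) : ℝ) * Real.sqrt (2 * (n:ℝ) + 1) := by
          norm_cast
      _ ≤ Real.sqrt 2 * 2 ^ (2 * n + 1) := hfin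

/-- Reusken's combinatorial operator bound in a complex normed algebra. -/
lemma reusken_op_bound {R : Type*} [NormedRing R] [NormOneClass R] [NormedAlgebra ℂ R]
    (b : R) (hb : ‖b‖ ≤ 1) {k : ℕ} (hk : 1 ≤ k) :
    ‖(1 - b) * (1 + b) ^ k‖ ≤ 2 * Nat.choose k ((k + 1) / 2) := by
  set d : ℕ → R := fun j => if j = 0 then (0 : R) else (Nat.choose k (j - 1) : R) with hd
  have hpow : (1 + b) ^ k = ∑ j ∈ Finset.range (k + 1), b ^ j * (Nat.choose k j : R) := by
    rw [add_comm, Commute.add_pow (Commute.one_right b)]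
    exact Finset.sum_congr rfl fun j hj => by rw [one_pow, mul_one]
  have hX : (1 + b) ^ k = ∑ j ∈ Finset.range (k + 2), b ^ j * (Nat.choose k j : R) := by
    rw [hpow, Finset.sum_range_succ (n := k + 1)]
    simp [Nat.choose_succ_self]
  have hY : b * (1 + b) ^ k = ∑ j ∈ Finset.range (k + 2), b ^ j * d j := by
    rw [hpow, Finset.mul_sum, Finset.sum_range_succ' (fun j => b ^ j * d j) (k + 1)]
    have h0 : b ^ 0 * d 0 = 0 := by simp [hd]
    rw [h0, add_zero]
    refine Finset.sum_congr rfl fun j _ => ?_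
    have hdj : d (j + 1) = (Nat.choose k j : R) := by simp [hd]
    rw [hdj, ← mul_assoc, ← pow_succ', add_comm j 1]
  have hdiff : (1 - b) * (1 + b) ^ k = ∑ j ∈ Finset.range (k + 2),
      b ^ j * ((Nat.choose k j : R) - d j) := by
    rw [sub_mul, one_mul, hY, hX, ← Finset.sum_sub_distrib]
    exact Finset.sum_congr rfl fun j hj => (mul_sub _ _ _).symm
  have hcast : (2 * Nat.choose k ((k + 1) / 2) : ℝ) =
      ∑ j ∈ Finset.range (k + 2),
        |(Nat.choose k j : ℝ) - (if j = 0 then 0 else (Nat.choose k (j - 1) : ℝ))| :=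
    (sum_abs_choose_diff hk).symm
  rw [hdiff]
  calc ‖∑ j ∈ Finset.range (k + 2), b ^ j * ((Nat.choose k j : R) - d j)‖
      ≤ ∑ j ∈ Finset.range (k + 2), ‖b ^ j * ((Nat.choose k j : R) - d j)‖ := norm_sum_le _ _
    _ ≤ ∑ j ∈ Finset.range (k + 2),
        |(Nat.choose k j : ℝ) - (if j = 0 then 0 else (Nat.choose k (j - 1) : ℝ))| := by
        refine Finset.sum_le_sum fun j hj => ?_
        have h1 : ‖b ^ j‖ ≤ 1 := by
          calc ‖b ^ j‖ ≤ ‖b‖ ^ j := norm_pow_le b j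
            _ ≤ 1 := pow_le_one₀ (norm_nonneg b) hb
        have h2 : (Nat.choose k j : R) - d j =
            (((Nat.choose k j : ℝ) - (if j = 0 then 0 else (Nat.choose k (j - 1) : ℝ)) : ℝ) : ℂ) • (1 : R) := by
          by_cases hj0 : j = 0
          · subst hj0
            simp [hd, Algebra.algebraMap_eq_smul_one]
          · rw [hd]
            simp only [if_neg hj0]
            push_cast
            rw [sub_smul]
            congr 1 <;> simp [Nat.cast_smul_eq_nsmul]
        rw [h2]
        refine le_trans (norm_mul_le _ _) ?_
        rw [norm_smul, norm_one, mul_one]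
        calc ‖b ^ j‖ * ‖((((Nat.choose k j : ℝ) - (if j = 0 then 0 else (Nat.choose k (j - 1) : ℝ)) : ℝ)) : ℂ)‖
            ≤ 1 * ‖((((Nat.choose k j : ℝ) - (if j = 0 then 0 else (Nat.choose k (j - 1) : ℝ)) : ℝ)) : ℂ)‖ :=
              mul_le_mul_of_nonneg_right h1 (norm_nonneg _)
          _ = |(Nat.choose k j : ℝ) - (if j = 0 then 0 else (Nat.choose k (j - 1) : ℝ))| := by
              rw [one_mul, Complex.norm_real, Real.norm_eq_abs]
    _ = 2 * Nat.choose k ((k + 1) / 2) := hcast.symm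

end AuxGeneral

section AuxMatrix

open Matrix
open scoped Kronecker

variable {n : Type*} [Fintype n] [DecidableEq n]

lemma isUnit_toEuclideanCLM_iff (M : Matrix n n ℂ) :
    IsUnit (Matrix.toEuclideanCLM (𝕜 := ℂ) M) ↔ IsUnit M := by
  constructor
  · intro h
    have h2 := h.map (Matrix.toEuclideanCLM (𝕜 := ℂ) (n := n)).symm
    simpa using h2
  · exact fun h => h.map _

lemma toEuclideanCLM_inv (M : Matrix n n ℂ) (h : IsUnit M) :
    Matrix.toEuclideanCLM (𝕜 := ℂ) M⁻¹ = Ring.inverse (Matrix.toEuclideanCLM (𝕜 := ℂ) M) := by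
  have hd := (Matrix.isUnit_iff_isUnit_det M).mp h
  refine (ring_inverse_eq' ?_ ?_).symm
  · rw [← _root_.map_mul, Matrix.mul_nonsing_inv _ hd, _root_.map_one]
  · rw [← _root_.map_mul, Matrix.nonsing_inv_mul _ hd, _root_.map_one]

lemma isUnit_smul_matrix {c : ℂ} (hc : c ≠ 0) {M : Matrix n n ℂ} (h : IsUnit M) :
    IsUnit (c • M) := by
  have e1 : (c • (1 : Matrix n n ℂ)) * (c⁻¹ • (1 : Matrix n n ℂ)) = 1 := by
    rw [smul_mul_assoc, one_mul, smul_smul, mul_inv_cancel₀ hc, one_smul]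
  have e2 : (c⁻¹ • (1 : Matrix n n ℂ)) * (c • (1 : Matrix n n ℂ)) = 1 := by
    rw [smul_mul_assoc, one_mul, smul_smul, inv_mul_cancel₀ hc, one_smul]
  have hone : IsUnit (c • (1 : Matrix n n ℂ)) := ⟨⟨_, _, e1, e2⟩, rfl⟩
  have e3 : (c • (1 : Matrix n n ℂ)) * M = c • M := by
    rw [smul_mul_assoc, one_mul]
  rw [← e3]
  exact hone.mul h

variable {l m p q : Type*}

lemma cmplx_map (X : Matrix l m ℝ) : cmplx X = X.map Complex.ofRealHom := rfl

lemma cmplx_mul [Fintype m] (X : Matrix l m ℝ) (Y : Matrix m p ℝ) :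
    cmplx (X * Y) = cmplx X * cmplx Y := by
  simp [cmplx_map, Matrix.map_mul]

lemma cmplx_one [DecidableEq l] : cmplx (1 : Matrix l l ℝ) = 1 := by
  rw [cmplx_map]
  exact Matrix.map_one _ (map_zero _) (map_one _)

lemma cmplx_sub (X Y : Matrix l m ℝ) : cmplx (X - Y) = cmplx X - cmplx Y := by
  simp [cmplx_map, Matrix.map_sub]

lemma cmplx_isUnit [DecidableEq l] [Fintype l] {X : Matrix l l ℝ} (h : IsUnit X) :
    IsUnit (cmplx X) := by
  have h2 := h.map (Complex.ofRealHom.mapMatrix (m := l))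
  simpa [RingHom.mapMatrix_apply, cmplx_map] using h2

lemma cmplx_inv [DecidableEq l] [Fintype l] {X : Matrix l l ℝ} (h : IsUnit X) :
    (cmplx X)⁻¹ = cmplx X⁻¹ := by
  apply Matrix.inv_eq_right_inv
  rw [← cmplx_mul, Matrix.mul_nonsing_inv _ ((Matrix.isUnit_iff_isUnit_det X).mp h), cmplx_one]

lemma sub_kron [Fintype m] (X Y : Matrix l m ℂ) (Z : Matrix p q ℂ) :
    (X - Y) ⊗ₖ Z = X ⊗ₖ Z - Y ⊗ₖ Z := by
  rw [sub_eq_add_neg, Matrix.add_kronecker, ← neg_one_smul ℂ Y, Matrix.smul_kronecker,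
    neg_one_smul, ← sub_eq_add_neg]

lemma kron_sub [Fintype m] (X : Matrix l m ℂ) (Y Z : Matrix p q ℂ) :
    X ⊗ₖ (Y - Z) = X ⊗ₖ Y - X ⊗ₖ Z := by
  rw [sub_eq_add_neg, Matrix.kronecker_add, ← neg_one_smul ℂ Z, Matrix.kronecker_smul,
    neg_one_smul, ← sub_eq_add_neg]

end AuxMatrix

set_option maxHeartbeats 1000000 in
theorem stmt_17 (L M N : ℕ) (hL : 0 < L) (hM : 0 < M) (hN : 0 < N)
    (Q QΔ : Matrix (Fin M) (Fin M) ℝ) (A : Matrix (Fin N) (Fin N) ℂ)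
    (hQΔ : IsUnit QΔ) (hA : IsUnit A)
    (hB : opNorm ((1 : Matrix (Fin L) (Fin L) ℂ) ⊗ₖ
        (cmplx ((1 : Matrix (Fin M) (Fin M) ℝ) - QΔ⁻¹ * Q) ⊗ₖ
          (1 : Matrix (Fin N) (Fin N) ℂ))) < 1) :
    ∃ c > (0 : ℝ), ∃ μs > (0 : ℝ), ∀ μ : ℝ, μs ≤ μ → ∀ k : ℕ, 1 ≤ k →
      IsUnit (Phat2 L QΔ A μ) ∧
      opNorm (Cmat L Q A μ * (Tdamped L Q QΔ A μ) ^ k) ≤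
        c * Real.sqrt (8 / (k * Real.pi)) * μ := by
  haveI hne : Nonempty (Fin L × Fin M × Fin N) := ⟨(⟨0, hL⟩, ⟨0, hM⟩, ⟨0, hN⟩)⟩
  classical
  set K : Matrix (Fin L × Fin M × Fin N) (Fin L × Fin M × Fin N) ℂ :=
    (1 : Matrix (Fin L) (Fin L) ℂ) ⊗ₖ (cmplx QΔ ⊗ₖ A) with hKdef
  set KQ : Matrix (Fin L × Fin M × Fin N) (Fin L × Fin M × Fin N) ℂ :=
    (1 : Matrix (Fin L) (Fin L) ℂ) ⊗ₖ (cmplx Q ⊗ₖ A) with hKQdef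
  set Eh : Matrix (Fin L × Fin M × Fin N) (Fin L × Fin M × Fin N) ℂ := EH L M N with hEhdef
  set D : Matrix (Fin L × Fin M × Fin N) (Fin L × Fin M × Fin N) ℂ := KQ - K with hDdef
  -- units
  have hQc : IsUnit (cmplx QΔ) := cmplx_isUnit hQΔ
  have hQcdet := (Matrix.isUnit_iff_isUnit_det _).mp hQc
  have hAdet := (Matrix.isUnit_iff_isUnit_det _).mp hA
  set Kinv : Matrix (Fin L × Fin M × Fin N) (Fin L × Fin M × Fin N) ℂ :=
    (1 : Matrix (Fin L) (Fin L) ℂ) ⊗ₖ ((cmplx QΔ)⁻¹ ⊗ₖ A⁻¹) with hKinvdef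
  have hKK : K * Kinv = 1 := by
    rw [hKdef, hKinvdef, ← Matrix.mul_kronecker_mul, ← Matrix.mul_kronecker_mul, one_mul,
      Matrix.mul_nonsing_inv _ hQcdet, Matrix.mul_nonsing_inv _ hAdet,
      Matrix.one_kronecker_one, Matrix.one_kronecker_one]
  have hK'K : Kinv * K = 1 := by
    rw [hKdef, hKinvdef, ← Matrix.mul_kronecker_mul, ← Matrix.mul_kronecker_mul, one_mul,
      Matrix.nonsing_inv_mul _ hQcdet, Matrix.nonsing_inv_mul _ hAdet,
      Matrix.one_kronecker_one, Matrix.one_kronecker_one]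
  have hKu : IsUnit K := ⟨⟨K, Kinv, hKK, hK'K⟩, rfl⟩
  have hKinveq : K⁻¹ = Kinv := Matrix.inv_eq_right_inv hKK
  -- the limit matrix
  set Binf : Matrix (Fin L × Fin M × Fin N) (Fin L × Fin M × Fin N) ℂ :=
    (1 : Matrix (Fin L) (Fin L) ℂ) ⊗ₖ
      (cmplx ((1 : Matrix (Fin M) (Fin M) ℝ) - QΔ⁻¹ * Q) ⊗ₖ
        (1 : Matrix (Fin N) (Fin N) ℂ)) with hBinfdef
  have hBinfeq : K⁻¹ * D = -Binf := by
    have e1 : K⁻¹ * D = (1 : Matrix (Fin L) (Fin L) ℂ) ⊗ₖ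
        (((cmplx QΔ)⁻¹ * cmplx Q) ⊗ₖ (1 : Matrix (Fin N) (Fin N) ℂ)) - 1 := by
      rw [hKinveq, hDdef, Matrix.mul_sub, hK'K, hKinvdef, hKQdef, ← Matrix.mul_kronecker_mul,
        ← Matrix.mul_kronecker_mul, one_mul, Matrix.nonsing_inv_mul _ hAdet]
    rw [e1, hBinfdef, cmplx_sub, cmplx_one, cmplx_mul, ← cmplx_inv hQΔ, sub_kron, kron_sub,
      Matrix.one_kronecker_one, Matrix.one_kronecker_one, neg_sub]
  -- CLM side
  set Φ : Matrix (Fin L × Fin M × Fin N) (Fin L × Fin M × Fin N) ℂ ≃⋆ₐ[ℂ]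
      (EuclideanSpace ℂ (Fin L × Fin M × Fin N) →L[ℂ] EuclideanSpace ℂ (Fin L × Fin M × Fin N)) :=
    Matrix.toEuclideanCLM (𝕜 := ℂ) with hΦdef
  set 𝕂 := Φ K with h𝕂
  set 𝔻 := Φ D with h𝔻
  set 𝔼 := Φ Eh with h𝔼
  have hKuC : IsUnit 𝕂 := by rw [h𝕂]; exact hKu.map _
  set g : ℝ → (EuclideanSpace ℂ (Fin L × Fin M × Fin N) →L[ℂ] EuclideanSpace ℂ (Fin L × Fin M × Fin N)) :=
    fun s => Ring.inverse (𝕂 - ((s : ℝ) : ℂ) • 1) *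
      (((s : ℝ) : ℂ) • 1 - 𝔻 - ((2 * s : ℝ) : ℂ) • 𝔼) with hg
  have hz1 : ((0:ℝ):ℂ) • (1 : EuclideanSpace ℂ (Fin L × Fin M × Fin N) →L[ℂ]
      EuclideanSpace ℂ (Fin L × Fin M × Fin N)) = 0 := by
    ext v; simp
  have hz2 : ((2 * (0:ℝ) : ℝ):ℂ) • 𝔼 = (0 : EuclideanSpace ℂ (Fin L × Fin M × Fin N) →L[ℂ]
      EuclideanSpace ℂ (Fin L × Fin M × Fin N)) := by
    ext v; simp
  have hf0 : 𝕂 - ((0:ℝ):ℂ) • (1 : EuclideanSpace ℂ (Fin L × Fin M × Fin N) →L[ℂ]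
      EuclideanSpace ℂ (Fin L × Fin M × Fin N)) = 𝕂 := by rw [hz1, sub_zero]
  have hf1 : Continuous (fun s : ℝ => 𝕂 - ((s : ℝ) : ℂ) •
      (1 : EuclideanSpace ℂ (Fin L × Fin M × Fin N) →L[ℂ] EuclideanSpace ℂ (Fin L × Fin M × Fin N))) := by
    fun_prop
  have hf2 : Continuous (fun s : ℝ => (((s : ℝ) : ℂ) •
      (1 : EuclideanSpace ℂ (Fin L × Fin M × Fin N) →L[ℂ] EuclideanSpace ℂ (Fin L × Fin M × Fin N))
      - 𝔻 - ((2 * s : ℝ) : ℂ) • 𝔼)) := by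
    fun_prop
  have hRinvAt : ContinuousAt Ring.inverse (𝕂 - ((0:ℝ):ℂ) •
      (1 : EuclideanSpace ℂ (Fin L × Fin M × Fin N) →L[ℂ] EuclideanSpace ℂ (Fin L × Fin M × Fin N))) := by
    rw [hf0]
    obtain ⟨u, hu⟩ := hKuC
    exact hu ▸ NormedRing.inverse_continuousAt u
  have hcomp : ContinuousAt (fun s : ℝ => Ring.inverse (𝕂 - ((s : ℝ) : ℂ) •
      (1 : EuclideanSpace ℂ (Fin L × Fin M × Fin N) →L[ℂ] EuclideanSpace ℂ (Fin L × Fin M × Fin N)))) 0 :=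
    ContinuousAt.comp (g := Ring.inverse) hRinvAt hf1.continuousAt
  have hgc : ContinuousAt g 0 := hcomp.mul hf2.continuousAt
  have hRi : Φ K⁻¹ = Ring.inverse (Φ K) := toEuclideanCLM_inv K hKu
  have hg0 : g 0 = Φ Binf := by
    have hgg : g 0 = Ring.inverse (𝕂 - ((0:ℝ):ℂ) • 1) *
        (((0:ℝ):ℂ) • 1 - 𝔻 - ((2 * (0:ℝ) : ℝ):ℂ) • 𝔼) := rfl
    rw [hgg, hf0, hz1, hz2, zero_sub, sub_zero, h𝕂, h𝔻, ← hRi]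
    have hneg : Φ (-D) = -Φ D := map_neg Φ D
    rw [← hneg, ← _root_.map_mul]
    rw [Matrix.mul_neg, hBinfeq, neg_neg]
  have hg0lt : ‖g 0‖ < 1 := by rw [hg0]; exact hB
  have hev : ∀ᶠ s : ℝ in nhds (0:ℝ), IsUnit (𝕂 - ((s : ℝ):ℂ) • 1) ∧ ‖g s‖ < 1 := by
    have e1 : ∀ᶠ s : ℝ in nhds (0:ℝ), IsUnit (𝕂 - ((s : ℝ):ℂ) • 1) := by
      have hmem : {x : EuclideanSpace ℂ (Fin L × Fin M × Fin N) →L[ℂ]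
          EuclideanSpace ℂ (Fin L × Fin M × Fin N) | IsUnit x} ∈
          nhds ((fun s : ℝ => 𝕂 - ((s : ℝ):ℂ) • 1) 0) := by
        apply Units.isOpen.mem_nhds
        show IsUnit (𝕂 - ((0:ℝ):ℂ) • 1)
        rw [hf0]
        exact hKuC
      exact hf1.continuousAt.eventually_mem hmem
    have e2 : ∀ᶠ s : ℝ in nhds (0:ℝ), ‖g s‖ < 1 :=
      Filter.Tendsto.eventually_lt_const hg0lt hgc.norm
    exact e1.and e2
  obtain ⟨δ, hδpos, hδ⟩ := Metric.eventually_nhds_iff.mp hev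
  refine ⟨Real.sqrt Real.pi * (δ + 2 * ‖𝕂‖ + 1),
    mul_pos (Real.sqrt_pos.mpr Real.pi_pos) (by positivity), δ⁻¹, inv_pos.mpr hδpos, ?_⟩
  intro μ hμ k hk
  have hμpos : 0 < μ := lt_of_lt_of_le (inv_pos.mpr hδpos) hμ
  have hτc : (μ:ℂ) ≠ 0 := Complex.ofReal_ne_zero.mpr (ne_of_gt hμpos)
  set s : ℝ := (2 * μ)⁻¹ with hsdef
  have hspos : 0 < s := by rw [hsdef]; positivity
  have hsles : s < δ := by
    have h1 : (2*μ)⁻¹ ≤ (2*δ⁻¹)⁻¹ := by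
      apply inv_anti₀ (by positivity)
      nlinarith [hμ]
    have h2 : (2*δ⁻¹)⁻¹ = 2⁻¹*δ := by rw [mul_inv, inv_inv]
    rw [hsdef]
    rw [h2] at h1
    linarith
  have hdist : dist s (0:ℝ) < δ := by
    rw [Real.dist_eq, sub_zero, abs_of_pos hspos]; exact hsles
  obtain ⟨hunitC, hgs⟩ := hδ hdist
  have hsm1 : Φ (((s:ℝ):ℂ) • (1 : Matrix (Fin L × Fin M × Fin N) (Fin L × Fin M × Fin N) ℂ)) =
      ((s:ℝ):ℂ) • (1 : EuclideanSpace ℂ (Fin L × Fin M × Fin N) →L[ℂ]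
        EuclideanSpace ℂ (Fin L × Fin M × Fin N)) := by
    have h1 := map_smul Φ ((s:ℝ):ℂ) (1 : Matrix (Fin L × Fin M × Fin N) (Fin L × Fin M × Fin N) ℂ)
    rw [_root_.map_one Φ] at h1
    exact h1
  have hmapKs : Φ (K - ((s:ℝ):ℂ) • 1) = 𝕂 - ((s:ℝ):ℂ) • 1 := by
    rw [map_sub, hsm1, ← h𝕂]
  have hKsu : IsUnit (K - ((s:ℝ):ℂ) • (1 : Matrix (Fin L × Fin M × Fin N) (Fin L × Fin M × Fin N) ℂ)) := by
    apply (isUnit_toEuclideanCLM_iff _).mp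
    show IsUnit (Φ (K - ((s:ℝ):ℂ) • 1))
    rw [hmapKs]; exact hunitC
  have hKsdet := (Matrix.isUnit_iff_isUnit_det _).mp hKsu
  have hms : ((2 * μ : ℝ) : ℂ) * ((s:ℝ) : ℂ) = 1 := by
    rw [hsdef]; push_cast; field_simp
  have hPdecomp : Phat2 L QΔ A μ = ((-(2 * μ) : ℝ) : ℂ) • (K - ((s:ℝ):ℂ) • 1) := by
    simp only [Phat2]
    rw [← hKdef]
    have hneg : ((-(2*μ):ℝ):ℂ) = -((2*μ:ℝ):ℂ) := by push_cast; ring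
    rw [hneg, smul_sub, smul_smul, neg_mul, hms, neg_smul, neg_smul, sub_neg_eq_add, one_smul]
    abel
  have hPu : IsUnit (Phat2 L QΔ A μ) := by
    rw [hPdecomp]
    refine isUnit_smul_matrix ?_ hKsu
    exact Complex.ofReal_ne_zero.mpr (neg_ne_zero.mpr (by positivity))
  refine ⟨hPu, ?_⟩
  set P := Phat2 L QΔ A μ with hPdef2
  have hPdet := (Matrix.isUnit_iff_isUnit_det P).mp hPu
  have hPP : P * P⁻¹ = 1 := Matrix.mul_nonsing_inv _ hPdet
  have hP'P : P⁻¹ * P = 1 := Matrix.nonsing_inv_mul _ hPdet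
  set Cm := Cmat L Q A μ with hCmdef
  set Bm := (1 : Matrix (Fin L × Fin M × Fin N) (Fin L × Fin M × Fin N) ℂ) -
    (2:ℂ) • (P⁻¹ * Cm) with hBmdef
  have hT : Tdamped L Q QΔ A μ = (2:ℂ)⁻¹ • (1 + Bm) := by
    simp only [Tdamped]
    rw [← hPdef2, ← hCmdef, hBmdef]
    module
  have hone_sub : (1 : Matrix (Fin L × Fin M × Fin N) (Fin L × Fin M × Fin N) ℂ) - Bm =
      (2:ℂ) • (P⁻¹ * Cm) := by rw [hBmdef]; module
  have hCP : Cm = (2:ℂ)⁻¹ • (P * ((1 : Matrix (Fin L × Fin M × Fin N) (Fin L × Fin M × Fin N) ℂ) - Bm)) := by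
    rw [hone_sub, mul_smul_comm, ← Matrix.mul_assoc, hPP, Matrix.one_mul, smul_smul]
    norm_num
  have hCT : Cm * (Tdamped L Q QΔ A μ) ^ k =
      ((2:ℂ)⁻¹) ^ (k + 1) • (P * (((1 : Matrix (Fin L × Fin M × Fin N) (Fin L × Fin M × Fin N) ℂ) - Bm) *
        ((1 : Matrix (Fin L × Fin M × Fin N) (Fin L × Fin M × Fin N) ℂ) + Bm) ^ k)) := by
    rw [hT, smul_pow]
    calc Cm * ((2:ℂ)⁻¹ ^ k • (1 + Bm) ^ k) = (2:ℂ)⁻¹ ^ k • (Cm * (1 + Bm) ^ k) := by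
          rw [mul_smul_comm]
      _ = (2:ℂ)⁻¹ ^ k • (((2:ℂ)⁻¹ • (P * (1 - Bm))) * (1 + Bm) ^ k) := by rw [← hCP]
      _ = ((2:ℂ)⁻¹) ^ (k+1) • (P * ((1 - Bm) * (1 + Bm) ^ k)) := by
          rw [smul_mul_assoc, smul_smul, Matrix.mul_assoc, ← pow_succ]
  set W := ((s:ℝ):ℂ) • (1 : Matrix (Fin L × Fin M × Fin N) (Fin L × Fin M × Fin N) ℂ) - D -
    ((2*s : ℝ):ℂ) • Eh with hWdef
  have hPW : P - (2:ℂ) • Cm = ((-(2*μ):ℝ):ℂ) • W := by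
    rw [hWdef, hPdef2, hCmdef]
    simp only [Phat2, Cmat]
    rw [← hKdef, ← hKQdef, ← hEhdef, hDdef, hsdef]
    match_scalars <;> (push_cast; field_simp) <;> ring
  have hPmul : P * ((K - ((s:ℝ):ℂ) • 1)⁻¹ * W) = P - (2:ℂ) • Cm := by
    nth_rewrite 1 [hPdecomp]
    rw [smul_mul_assoc, ← Matrix.mul_assoc, Matrix.mul_nonsing_inv _ hKsdet,
      Matrix.one_mul, ← hPW]
  have hBmeq : Bm = (K - ((s:ℝ):ℂ) • 1)⁻¹ * W := by
    have e1 : Bm = P⁻¹ * (P - (2:ℂ) • Cm) := by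
      rw [hBmdef, Matrix.mul_sub, hP'P, mul_smul_comm]
    rw [e1, ← hPmul, ← Matrix.mul_assoc, hP'P, Matrix.one_mul]
  have hRi2 : Φ ((K - ((s:ℝ):ℂ) • 1)⁻¹) = Ring.inverse (Φ (K - ((s:ℝ):ℂ) • 1)) :=
    toEuclideanCLM_inv _ hKsu
  have hΦBm : Φ Bm = g s := by
    rw [hBmeq, _root_.map_mul, hRi2, hmapKs]
    have hgg : g s = Ring.inverse (𝕂 - ((s:ℝ):ℂ) • 1) *
        (((s:ℝ):ℂ) • 1 - 𝔻 - ((2*s : ℝ):ℂ) • 𝔼) := rfl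
    rw [hgg]
    congr 1
    have hsm2 : Φ (((2*s : ℝ):ℂ) • Eh) = ((2*s : ℝ):ℂ) • 𝔼 := by
      rw [h𝔼]; exact map_smul Φ _ _
    rw [hWdef, map_sub, map_sub, hsm1, hsm2, ← h𝔻]
  have hb1 : ‖Φ Bm‖ ≤ 1 := by rw [hΦBm]; exact hgs.le
  -- norms
  have hknat : (1:ℝ) ≤ (k:ℝ) := by exact_mod_cast hk
  have hkpos : (0:ℝ) < k := by linarith
  have hskpos : 0 < Real.sqrt k := Real.sqrt_pos.mpr hkpos
  have hmapall : Φ (P * (((1 : Matrix (Fin L × Fin M × Fin N) (Fin L × Fin M × Fin N) ℂ) - Bm) *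
      ((1 : Matrix (Fin L × Fin M × Fin N) (Fin L × Fin M × Fin N) ℂ) + Bm) ^ k)) =
      Φ P * ((1 - Φ Bm) * (1 + Φ Bm) ^ k) := by
    rw [_root_.map_mul, _root_.map_mul, map_sub, _root_.map_one, map_pow, map_add, _root_.map_one]
  have hru := reusken_op_bound (Φ Bm) hb1 hk
  have hchoose := choose_middle_sqrt_bound hk
  have hnorm : opNorm (Cm * (Tdamped L Q QΔ A μ) ^ k) ≤ ‖Φ P‖ * Real.sqrt 2 / Real.sqrt k := by
    have e0 : opNorm (Cm * (Tdamped L Q QΔ A μ) ^ k) = ‖Φ (Cm * (Tdamped L Q QΔ A μ) ^ k)‖ := rfl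
    have hmapsm : Φ (((2:ℂ)⁻¹) ^ (k + 1) • (P * (((1 : Matrix (Fin L × Fin M × Fin N) (Fin L × Fin M × Fin N) ℂ) - Bm) *
        ((1 : Matrix (Fin L × Fin M × Fin N) (Fin L × Fin M × Fin N) ℂ) + Bm) ^ k))) =
        ((2:ℂ)⁻¹) ^ (k + 1) • Φ (P * (((1 : Matrix (Fin L × Fin M × Fin N) (Fin L × Fin M × Fin N) ℂ) - Bm) *
        ((1 : Matrix (Fin L × Fin M × Fin N) (Fin L × Fin M × Fin N) ℂ) + Bm) ^ k)) := map_smul Φ _ _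
    have hns := norm_smul (((2:ℂ)⁻¹) ^ (k + 1))
      (Φ (P * (((1 : Matrix (Fin L × Fin M × Fin N) (Fin L × Fin M × Fin N) ℂ) - Bm) *
        ((1 : Matrix (Fin L × Fin M × Fin N) (Fin L × Fin M × Fin N) ℂ) + Bm) ^ k)))
    rw [e0, hCT, hmapsm, hns, hmapall]
    have hc : ‖((2:ℂ)⁻¹) ^ (k+1)‖ = ((2:ℝ)⁻¹) ^ (k+1) := by
      rw [norm_pow, norm_inv]
      norm_num
    rw [hc]
    have step1 : ‖Φ P * ((1 - Φ Bm) * (1 + Φ Bm) ^ k)‖ ≤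
        ‖Φ P‖ * (2 * Nat.choose k ((k+1)/2)) := by
      refine le_trans (norm_mul_le _ _) ?_
      exact mul_le_mul_of_nonneg_left hru (norm_nonneg _)
    have hCkle : (Nat.choose k ((k+1)/2) : ℝ) ≤ Real.sqrt 2 * 2 ^ k / Real.sqrt k :=
      (le_div_iff₀ hskpos).mpr hchoose
    have hpow2 : ((2:ℝ)⁻¹) ^ (k+1) * (2 * 2 ^ k) = 1 := by
      rw [show (2:ℝ) * 2 ^ k = 2 ^ (k+1) by rw [pow_succ]; ring, inv_pow]
      exact inv_mul_cancel₀ (by positivity)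
    calc ((2:ℝ)⁻¹) ^ (k+1) * ‖Φ P * ((1 - Φ Bm) * (1 + Φ Bm) ^ k)‖
        ≤ ((2:ℝ)⁻¹) ^ (k+1) * (‖Φ P‖ * (2 * Nat.choose k ((k+1)/2))) := by
          exact mul_le_mul_of_nonneg_left step1 (by positivity)
      _ ≤ ((2:ℝ)⁻¹) ^ (k+1) * (‖Φ P‖ * (2 * (Real.sqrt 2 * 2 ^ k / Real.sqrt k))) := by
          apply mul_le_mul_of_nonneg_left _ (by positivity)
          apply mul_le_mul_of_nonneg_left _ (norm_nonneg _)
          exact mul_le_mul_of_nonneg_left hCkle (by norm_num)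
      _ = ‖Φ P‖ * Real.sqrt 2 / Real.sqrt k * (((2:ℝ)⁻¹) ^ (k+1) * (2 * 2 ^ k)) := by
          field_simp
          try ring
      _ = ‖Φ P‖ * Real.sqrt 2 / Real.sqrt k := by rw [hpow2, mul_one]
  have hPnorm : ‖Φ P‖ ≤ μ * (δ + 2 * ‖𝕂‖) := by
    have hsmP : Φ (((2*μ:ℝ):ℂ) • K) = ((2*μ:ℝ):ℂ) • 𝕂 := by
      rw [h𝕂]; exact map_smul Φ _ _
    have e : Φ P = 1 - ((2*μ:ℝ):ℂ) • 𝕂 := by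
      rw [hPdef2]
      simp only [Phat2]
      rw [← hKdef, map_sub, _root_.map_one, hsmP]
    rw [e]
    refine le_trans (norm_sub_le _ _) ?_
    rw [norm_one]
    have hnsm := norm_smul (((2*μ:ℝ):ℂ)) 𝕂
    rw [hnsm]
    have hn2 : ‖((2*μ:ℝ):ℂ)‖ = 2*μ := by
      rw [Complex.norm_real, Real.norm_eq_abs, abs_of_pos (by positivity)]
    rw [hn2]
    have h1δ : 1 ≤ μ * δ := by
      calc (1:ℝ) = δ⁻¹ * δ := (inv_mul_cancel₀ (ne_of_gt hδpos)).symm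
        _ ≤ μ * δ := mul_le_mul_of_nonneg_right hμ hδpos.le
    nlinarith [norm_nonneg 𝕂, hμpos, hδpos]
  have hπpos : 0 < Real.sqrt Real.pi := Real.sqrt_pos.mpr Real.pi_pos
  have hsqrt8 : Real.sqrt (8 / ((k:ℝ) * Real.pi)) =
      2 * Real.sqrt 2 / (Real.sqrt k * Real.sqrt Real.pi) := by
    rw [Real.sqrt_div (by norm_num) ((k:ℝ) * Real.pi),
      Real.sqrt_mul (le_of_lt hkpos) Real.pi,
      show (8:ℝ) = 2^2 * 2 by norm_num, Real.sqrt_mul (by positivity),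
      Real.sqrt_sq (by norm_num)]
  have h2s : (0:ℝ) ≤ Real.sqrt 2 := Real.sqrt_nonneg 2
  have hkey : μ * (δ + 2 * ‖𝕂‖) * Real.sqrt 2 ≤
      (δ + 2 * ‖𝕂‖ + 1) * (2 * Real.sqrt 2) * μ := by
    nlinarith [mul_nonneg (mul_nonneg hμpos.le h2s)
      (by positivity : (0:ℝ) ≤ δ + 2 * ‖𝕂‖ + 2)]
  have hlast : μ * (δ + 2 * ‖𝕂‖) * Real.sqrt 2 / Real.sqrt k ≤
      Real.sqrt Real.pi * (δ + 2 * ‖𝕂‖ + 1) * Real.sqrt (8 / ((k:ℝ) * Real.pi)) * μ := by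
    rw [hsqrt8]
    have hRHS := real_rhs_eq (Real.sqrt Real.pi) (δ + 2 * ‖𝕂‖ + 1) (Real.sqrt k)
      (Real.sqrt 2) μ (ne_of_gt hskpos) (ne_of_gt hπpos)
    rw [hRHS]
    exact (div_le_div_iff_of_pos_right hskpos).mpr hkey
  calc opNorm (Cm * (Tdamped L Q QΔ A μ) ^ k)
      ≤ ‖Φ P‖ * Real.sqrt 2 / Real.sqrt k := hnorm
    _ ≤ μ * (δ + 2 * ‖𝕂‖) * Real.sqrt 2 / Real.sqrt k := by gcongr
    _ ≤ Real.sqrt Real.pi * (δ + 2 * ‖𝕂‖ + 1) * Real.sqrt (8 / ((k:ℝ) * Real.pi)) * μ := hlast
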